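/- Let G be a countable discrete group, K a topological field, and V a finite-dimensional K-linear G-representation. Then for every p, the group of coboundaries B^p(G,V) = d_p(C^{p-1}(G,V)) in the inhomogeneous bar resolution is a closed subgroup of C^p(G,V) (hence of Z^p(G,V)), so the group cohomology H^p(G,V) is reduced. -/

import Mathlib

open Function

/-- A linear subspace of a finite product of copies of a Hausdorff topological field
is closed. -/
theorem submodule_pi_isClosed {K : Type} [Field K] [TopologicalSpace K]
    [IsTopologicalRing K] [T1Space K] {ι : Type} [Finite ι]
    (W : Submodule K (ι → K)) : IsClosed (W : Set (ι → K)) := by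
  apply isClosed_of_closure_subset
  intro y hy
  by_contra hyW
  -- find a functional vanishing on W but not on y
  have : ¬ (Submodule.Quotient.mk y : (ι → K) ⧸ W) = 0 := by
    rwa [Submodule.Quotient.mk_eq_zero]
  rw [← Module.forall_dual_apply_eq_zero_iff K] at this
  push_neg at this
  obtain ⟨ψ, hψ⟩ := this
  set φ : (ι → K) →ₗ[K] K := ψ.comp W.mkQ with hφdef
  have hcont : Continuous φ := φ.continuous_on_pi
  have hker : (W : Set (ι → K)) ⊆ {x | φ x = 0} := by
    intro w hw
    simp only [Set.mem_setOf_eq, hφdef, LinearMap.comp_apply, Submodule.mkQ_apply]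
    rw [(Submodule.Quotient.mk_eq_zero W).mpr hw, map_zero]
  have hclosed : IsClosed {x : ι → K | φ x = 0} :=
    isClosed_eq hcont continuous_const
  have : φ y = 0 := (hclosed.closure_subset_iff.mpr hker) hy
  exact hψ this

/-- A row-finite affine system over a field, with countably many variables, is solvable
if every finite subsystem is solvable. -/
theorem solvable_of_finitelySolvable {K A B : Type} [Field K] [Encodable A]
    (T : (A → K) → (B → K))
    (haff : ∀ (z₁ z₂ : A → K) (t : K) (b : B),
      T (z₁ + t • (z₂ - z₁)) b = T z₁ b + t * (T z₂ b - T z₁ b))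
    (hT : ∀ b : B, ∃ s : Finset A, ∀ x x' : A → K,
      (∀ a ∈ s, x a = x' a) → T x b = T x' b)
    (y : B → K)
    (hy : ∀ F : Finset B, ∃ x, ∀ b ∈ F, T x b = y b) :
    ∃ x, T x = y := by
  classical
  -- the invariant for the partial assignments
  set Q : ℕ → (ℕ → K) → Prop := fun k w =>
    ∀ F : Finset B, ∃ z : A → K, (∀ b ∈ F, T z b = y b) ∧
      ∀ j, j < k → ∀ α : A, Encodable.decode j = some α → z α = w j with hQdef
  have hQ0 : Q 0 (fun _ => 0) := by
    intro F
    obtain ⟨z, hz⟩ := hy F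
    exact ⟨z, hz, fun j hj => absurd hj (Nat.not_lt_zero j)⟩
  have hQmono : ∀ k (w w' : ℕ → K), (∀ j, j < k → w j = w' j) → Q k w → Q k w' := by
    intro k w w' hww hQw F
    obtain ⟨z, hz1, hz2⟩ := hQw F
    exact ⟨z, hz1, fun j hj α hα => (hz2 j hj α hα).trans (hww j hj)⟩
  have step : ∀ k (w : ℕ → K), Q k w → ∃ c, Q (k + 1) (Function.update w k c) := by
    intro k w hw
    cases hdec : (Encodable.decode k : Option A) with
    | none =>
      refine ⟨0, fun F => ?_⟩
      obtain ⟨z, hz1, hz2⟩ := hw F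
      refine ⟨z, hz1, fun j hj α hα => ?_⟩
      rcases Nat.lt_succ_iff_lt_or_eq.mp hj with h | rfl
      · rw [Function.update_of_ne (Nat.ne_of_lt h)]
        exact hz2 j h α hα
      · rw [hdec] at hα; cases hα
    | some α =>
      set E : Finset B → Set K := fun F => {c | ∃ z : A → K,
        (∀ b ∈ F, T z b = y b) ∧
        (∀ j, j < k → ∀ β : A, Encodable.decode j = some β → z β = w j) ∧
        z α = c} with hEdef
      have hne : ∀ F, (E F).Nonempty := by
        intro F
        obtain ⟨z, hz1, hz2⟩ := hw F
        exact ⟨z α, z, hz1, hz2, rfl⟩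
      have hafn : ∀ F (c₁ c₂ t : K), c₁ ∈ E F → c₂ ∈ E F →
          c₁ + t * (c₂ - c₁) ∈ E F := by
        intro F c₁ c₂ t hc₁ hc₂
        obtain ⟨z₁, h11, h12, h13⟩ := hc₁
        obtain ⟨z₂, h21, h22, h23⟩ := hc₂
        refine ⟨z₁ + t • (z₂ - z₁), fun b hb => ?_, fun j hj β hβ => ?_, ?_⟩
        · rw [haff, h11 b hb, h21 b hb, sub_self, mul_zero, add_zero]
        · simp only [Pi.add_apply, Pi.smul_apply, Pi.sub_apply, smul_eq_mul,
            h12 j hj β hβ, h22 j hj β hβ, sub_self, mul_zero, add_zero]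
        · simp only [Pi.add_apply, Pi.smul_apply, Pi.sub_apply, smul_eq_mul, h13, h23]
      have hanti : ∀ F F' : Finset B, F ⊆ F' → E F' ⊆ E F := by
        intro F F' hFF c hc
        obtain ⟨z, h1, h2, h3⟩ := hc
        exact ⟨z, fun b hb => h1 b (hFF hb), h2, h3⟩
      have key : ∃ c, ∀ F, c ∈ E F := by
        by_cases hsub : ∃ F₀, (E F₀).Subsingleton
        · obtain ⟨F₀, hF₀⟩ := hsub
          obtain ⟨c, hc⟩ := hne F₀
          refine ⟨c, fun F => ?_⟩
          obtain ⟨c', hc'⟩ := hne (F ∪ F₀)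
          have h1 : c' ∈ E F₀ := hanti _ _ Finset.subset_union_right hc'
          have h2 : c' = c := hF₀ h1 hc
          exact h2 ▸ hanti _ _ Finset.subset_union_left hc'
        · push_neg at hsub
          refine ⟨0, fun F => ?_⟩
          have hnt : (E F).Nontrivial := hsub F
          obtain ⟨c₁, hc₁, c₂, hc₂, hne12⟩ := hnt
          have := hafn F c₁ c₂ ((0 - c₁) / (c₂ - c₁)) hc₁ hc₂
          rwa [div_mul_cancel₀ _ (sub_ne_zero.mpr (Ne.symm hne12)), zero_sub,
            add_neg_cancel] at this
      obtain ⟨c, hc⟩ := key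
      refine ⟨c, fun F => ?_⟩
      obtain ⟨z, h1, h2, h3⟩ := hc F
      refine ⟨z, h1, fun j hj β hβ => ?_⟩
      rcases Nat.lt_succ_iff_lt_or_eq.mp hj with h | rfl
      · rw [Function.update_of_ne (Nat.ne_of_lt h)]
        exact h2 j h β hβ
      · rw [hdec] at hβ
        cases hβ
        rw [Function.update_self]
        exact h3
  -- build the sequence of partial assignments
  let u : (k : ℕ) → {w : ℕ → K // Q k w} := fun k =>
    Nat.rec ⟨fun _ => 0, hQ0⟩
      (fun k uk => ⟨Function.update uk.1 k (Classical.choose (step k uk.1 uk.2)),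
        Classical.choose_spec (step k uk.1 uk.2)⟩) k
  have hu_succ : ∀ k j, j < k → (u (k + 1)).1 j = (u k).1 j := by
    intro k j hj
    exact Function.update_of_ne (Nat.ne_of_lt hj) _ _
  have hu_stab : ∀ j k k', j < k → k ≤ k' → (u k').1 j = (u k).1 j := by
    intro j k k' hj hkk
    induction k' with
    | zero => omega
    | succ m ih =>
      rcases Nat.lt_or_ge m k with h | h
      · have : k = m + 1 := by omega
        rw [this]
      · rw [hu_succ m j (lt_of_lt_of_le hj h)]
        exact ih h
  set v : ℕ → K := fun j => (u (j + 1)).1 j with hvdef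
  have hQv : ∀ k, Q k v := by
    intro k
    apply hQmono k (u k).1 v _ (u k).2
    intro j hj
    exact hu_stab j (j + 1) k (Nat.lt_succ_self j) hj
  set x : A → K := fun α => v (Encodable.encode α) with hxdef
  refine ⟨x, funext fun b => ?_⟩
  obtain ⟨s, hs⟩ := hT b
  set k : ℕ := (s.sup fun a => Encodable.encode a) + 1 with hkdef
  obtain ⟨z, hz1, hz2⟩ := hQv k {b}
  have hxz : ∀ a ∈ s, x a = z a := by
    intro a ha
    have hlt : Encodable.encode a < k := by
      have h := Finset.le_sup (f := fun a => Encodable.encode a) ha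
      exact Nat.lt_succ_of_le h
    exact (hz2 (Encodable.encode a) hlt a (Encodable.encodek a)).symm
  rw [hs x z hxz]
  exact hz1 b (Finset.mem_singleton_self b)

theorem closed_range_of_rowFinite {K A B : Type} [Field K] [TopologicalSpace K]
    [IsTopologicalRing K] [T1Space K] [Encodable A]
    (T : (A → K) → (B → K))
    (hadd : ∀ f g, T (f + g) = T f + T g)
    (hsmul : ∀ (c : K) f, T (c • f) = c • T f)
    (hT : ∀ b : B, ∃ s : Finset A, ∀ x x' : A → K,
      (∀ a ∈ s, x a = x' a) → T x b = T x' b) :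
    IsClosed (Set.range T) := by
  apply isClosed_of_closure_subset
  intro y hy
  have hfin : ∀ F : Finset B, ∃ x, ∀ b ∈ F, T x b = y b := by
    intro F
    set Tf : (A → K) →ₗ[K] (↥F → K) :=
      { toFun := fun x (b : ↥F) => T x b
        map_add' := fun f g => by
          funext b
          show T (f + g) ↑b = T f ↑b + T g ↑b
          rw [hadd]; rfl
        map_smul' := fun c f => by
          funext b
          show T (c • f) ↑b = (c • T f) ↑b
          rw [hsmul] } with hTfdef
    have hW : IsClosed (LinearMap.range Tf : Set (↥F → K)) :=
      submodule_pi_isClosed _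
    set res : (B → K) → (↥F → K) := fun g (b : ↥F) => g b with hresdef
    have hres : Continuous res := continuous_pi fun b => continuous_apply _
    have him : res '' Set.range T = (LinearMap.range Tf : Set (↥F → K)) := by
      ext c
      constructor
      · rintro ⟨g, ⟨x, rfl⟩, rfl⟩
        exact ⟨x, rfl⟩
      · rintro ⟨x, rfl⟩
        exact ⟨T x, ⟨x, rfl⟩, rfl⟩
    have hmem : res y ∈ closure (res '' Set.range T) :=
      (image_closure_subset_closure_image hres) ⟨y, hy, rfl⟩
    rw [him] at hmem
    have : res y ∈ (LinearMap.range Tf : Set (↥F → K)) :=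
      hW.closure_subset hmem
    obtain ⟨x, hx⟩ := this
    refine ⟨x, fun b hb => ?_⟩
    exact congrFun hx ⟨b, hb⟩
  have haff : ∀ (z₁ z₂ : A → K) (t : K) (b : B),
      T (z₁ + t • (z₂ - z₁)) b = T z₁ b + t * (T z₂ b - T z₁ b) := by
    intro z₁ z₂ t b
    have hsub : ∀ f g : A → K, T (f - g) = T f - T g := by
      intro f g
      have h1 : T (f - g + g) = T (f - g) + T g := hadd _ _
      rw [sub_add_cancel] at h1
      exact eq_sub_of_add_eq h1.symm
    rw [hadd, hsmul, hsub]
    simp [mul_sub]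
  obtain ⟨x, hx⟩ := solvable_of_finitelySolvable T haff hT y hfin
  exact ⟨x, hx⟩

/-- The inhomogeneous bar-resolution coboundary operator
`d : C^p(G,V) → C^{p+1}(G,V)`:
`d f (g_1,…,g_{p+1}) = π(g_1) f(g_2,…,g_{p+1})
  + ∑_{i=1}^{p} (-1)^i f(g_1,…,g_i g_{i+1},…,g_{p+1})
  + (-1)^{p+1} f(g_1,…,g_p)`. -/
def cochainD {K G V : Type} [Field K] [Group G] [AddCommGroup V] [Module K V]
    (π : Representation K G V) (p : ℕ) (f : (Fin p → G) → V) :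
    (Fin (p + 1) → G) → V :=
  fun g =>
    π (g 0) (f (fun i => g i.succ)) +
      (∑ i : Fin p, ((-1 : ℤ) ^ ((i : ℕ) + 1)) •
        f (fun j => if (j : ℕ) < (i : ℕ) then g j.castSucc
          else if (j : ℕ) = (i : ℕ) then g i.castSucc * g i.succ
          else g j.succ)) +
      ((-1 : ℤ) ^ (p + 1)) • f (fun j => g j.castSucc)


section cochainDlemmas
variable {K G V : Type} [Field K] [Group G] [AddCommGroup V] [Module K V]
  (π : Representation K G V) (p : ℕ)

theorem cochainD_add (f g : (Fin p → G) → V) :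
    cochainD π p (f + g) = cochainD π p f + cochainD π p g := by
  funext gs
  simp only [cochainD, Pi.add_apply, map_add, smul_add, Finset.sum_add_distrib]
  abel

theorem cochainD_smul (c : K) (f : (Fin p → G) → V) :
    cochainD π p (c • f) = c • cochainD π p f := by
  funext gs
  simp only [cochainD, Pi.smul_apply, map_smul, smul_comm _ c, ← Finset.smul_sum,
    ← smul_add]

theorem cochainD_congr (f f' : (Fin p → G) → V) (g : Fin (p + 1) → G)
    (h1 : f (fun i => g i.succ) = f' (fun i => g i.succ))
    (h2 : ∀ i : Fin p,
      f (fun j => if (j : ℕ) < (i : ℕ) then g j.castSucc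
          else if (j : ℕ) = (i : ℕ) then g i.castSucc * g i.succ
          else g j.succ) =
      f' (fun j => if (j : ℕ) < (i : ℕ) then g j.castSucc
          else if (j : ℕ) = (i : ℕ) then g i.castSucc * g i.succ
          else g j.succ))
    (h3 : f (fun j => g j.castSucc) = f' (fun j => g j.castSucc)) :
    cochainD π p f g = cochainD π p f' g := by
  simp only [cochainD, h1, h3]
  have hs : (∑ i : Fin p, ((-1 : ℤ) ^ ((i : ℕ) + 1)) •
      f (fun j => if (j : ℕ) < (i : ℕ) then g j.castSucc
        else if (j : ℕ) = (i : ℕ) then g i.castSucc * g i.succ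
        else g j.succ)) =
      ∑ i : Fin p, ((-1 : ℤ) ^ ((i : ℕ) + 1)) •
      f' (fun j => if (j : ℕ) < (i : ℕ) then g j.castSucc
        else if (j : ℕ) = (i : ℕ) then g i.castSucc * g i.succ
        else g j.succ) :=
    Finset.sum_congr rfl fun i _ => by rw [h2 i]
  rw [hs]

end cochainDlemmas

/-- For a countable discrete group `G`, a topological field `K`, and a
finite-dimensional `K`-linear `G`-representation `V = K^N`, the group of coboundaries
`B^{p+1}(G,V) = d(C^p(G,V))` of the inhomogeneous bar resolution is closed in the
cochain space `C^{p+1}(G,V)` (hence in `Z^{p+1}(G,V)`) for every `p`; together with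
the trivial case `B^0 = 0` this says all coboundary groups are closed, i.e. the
cohomology `H^*(G,V)` is reduced. -/
theorem stmt11 (K : Type) [Field K] [TopologicalSpace K] [IsTopologicalDivisionRing K]
    [T2Space K]
    (G : Type) [Group G] [Countable G]
    (N : ℕ) (π : Representation K G (Fin N → K)) (p : ℕ) :
    IsClosed (Set.range (cochainD π p) : Set ((Fin (p + 1) → G) → Fin N → K)) := by
  classical
  haveI : Encodable ((Fin p → G) × Fin N) := Encodable.ofCountable _
  let e : ((Fin (p + 1) → G) → Fin N → K) ≃ₜ (((Fin (p + 1) → G) × Fin N) → K) :=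
    { toEquiv := (Equiv.curry (Fin (p + 1) → G) (Fin N) K).symm
      continuous_toFun :=
        continuous_pi fun q => (continuous_apply q.2).comp (continuous_apply q.1)
      continuous_invFun :=
        continuous_pi fun a => continuous_pi fun m => continuous_apply (a, m) }
  set T : (((Fin p → G) × Fin N) → K) → (((Fin (p + 1) → G) × Fin N) → K) :=
    fun x q => cochainD π p (fun h m => x (h, m)) q.1 q.2 with hTdef
  have hadd : ∀ f g, T (f + g) = T f + T g := by
    intro x x'
    funext q
    have hx : (fun h m => (x + x') (h, m)) =
        (fun h m => x (h, m)) + (fun h m => x' (h, m)) := rfl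
    show cochainD π p (fun h m => (x + x') (h, m)) q.1 q.2 = _
    rw [hx, cochainD_add]
    rfl
  have hsmul : ∀ (c : K) f, T (c • f) = c • T f := by
    intro c x
    funext q
    have hx : (fun h m => (c • x) (h, m)) = c • (fun h m => x (h, m)) := rfl
    show cochainD π p (fun h m => (c • x) (h, m)) q.1 q.2 = _
    rw [hx, cochainD_smul]
    rfl
  have hT : ∀ b : (Fin (p + 1) → G) × Fin N,
      ∃ s : Finset ((Fin p → G) × Fin N), ∀ x x' : ((Fin p → G) × Fin N) → K,
        (∀ a ∈ s, x a = x' a) → T x b = T x' b := by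
    intro b
    set g : Fin (p + 1) → G := b.1 with hgdef
    set s₀ : Finset (Fin p → G) :=
      insert (fun i => g i.succ) (insert (fun j => g j.castSucc)
        (Finset.image (fun i : Fin p => fun j : Fin p =>
          if (j : ℕ) < (i : ℕ) then g j.castSucc
          else if (j : ℕ) = (i : ℕ) then g i.castSucc * g i.succ
          else g j.succ) Finset.univ)) with hs₀def
    refine ⟨s₀ ×ˢ Finset.univ, fun x x' hxx => ?_⟩
    have hf : ∀ h ∈ s₀, (fun m => x (h, m)) = (fun m => x' (h, m)) := by
      intro h hh
      funext m
      exact hxx (h, m) (Finset.mem_product.mpr ⟨hh, Finset.mem_univ m⟩)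
    have hcongr : cochainD π p (fun h m => x (h, m)) g =
        cochainD π p (fun h m => x' (h, m)) g := by
      apply cochainD_congr
      · exact hf _ (Finset.mem_insert_self _ _)
      · intro i
        refine hf _ (Finset.mem_insert_of_mem (Finset.mem_insert_of_mem ?_))
        exact Finset.mem_image_of_mem _ (Finset.mem_univ i)
      · exact hf _ (Finset.mem_insert_of_mem (Finset.mem_insert_self _ _))
    exact congrFun hcongr b.2
  have hclosed : IsClosed (Set.range T) :=
    closed_range_of_rowFinite T hadd hsmul hT
  have hrange : Set.range T = e '' Set.range (cochainD π p) := by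
    ext z
    constructor
    · rintro ⟨x, rfl⟩
      exact ⟨cochainD π p (fun h m => x (h, m)), ⟨_, rfl⟩, rfl⟩
    · rintro ⟨w, ⟨f, rfl⟩, rfl⟩
      exact ⟨fun q => f q.1 q.2, rfl⟩
  rw [hrange] at hclosed
  exact (Homeomorph.isClosed_image e).mp hclosed
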